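/- arXiv:2503.07623 — 6 statements merged into one kernel-verified Lean document; each statement's English description precedes it below -/
import Mathlib

section
/- Let u : EuclideanSpace ℝ (Fin n) → ℝ be C². Then for every x, div(y ↦ exp(‖∇u(y)‖²/2) • ∇u(y))(x) = exp(‖∇u(x)‖²/2) · (Δu(x) + Hess u(x)(∇u(x), ∇u(x))). In particular, u is exponentially harmonic if and only if Δu(x) + Hess u(x)(∇u(x), ∇u(x)) = 0 for all x. -/
open scoped RealInnerProductSpace
open Real MeasureTheory

noncomputable def Hess {n : ℕ} (f : EuclideanSpace ℝ (Fin n) → ℝ)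
    (x v w : EuclideanSpace ℝ (Fin n)) : ℝ :=
  iteratedFDeriv ℝ 2 f x ![v, w]

noncomputable def lap {n : ℕ} (f : EuclideanSpace ℝ (Fin n) → ℝ)
    (x : EuclideanSpace ℝ (Fin n)) : ℝ :=
  ∑ i, Hess f x (EuclideanSpace.basisFun (Fin n) ℝ i) (EuclideanSpace.basisFun (Fin n) ℝ i)

noncomputable def divg {n : ℕ} (X : EuclideanSpace ℝ (Fin n) → EuclideanSpace ℝ (Fin n))
    (x : EuclideanSpace ℝ (Fin n)) : ℝ :=
  ∑ i, ⟪fderiv ℝ X x (EuclideanSpace.basisFun (Fin n) ℝ i), EuclideanSpace.basisFun (Fin n) ℝ i⟫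

section aux

variable {n : ℕ} (u : EuclideanSpace ℝ (Fin n) → ℝ)

local notation "E" => EuclideanSpace ℝ (Fin n)

lemma inner_gradient_eq (y w : E) : ⟪gradient u y, w⟫ = fderiv ℝ u y w :=
  InnerProductSpace.toDual_symm_apply

lemma inner_fderiv_gradient (hu : ContDiff ℝ 2 u) (x v w : E) :
    ⟪fderiv ℝ (gradient u) x v, w⟫ = Hess u x v w := by
  have hF : ContDiff ℝ 1 (fderiv ℝ u) := hu.fderiv_right (le_refl _)
  have hGd : DifferentiableAt ℝ (gradient u) x := by
    have : ContDiff ℝ 1 (gradient u) :=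
      (InnerProductSpace.toDual ℝ E).symm.contDiff.comp hF
    exact (this.differentiable one_ne_zero).differentiableAt
  -- derivative of y ↦ ⟪w, gradient u y⟫
  have h1 : HasFDerivAt (fun y => ⟪w, gradient u y⟫)
      ((innerSL ℝ w).comp (fderiv ℝ (gradient u) x)) x :=
    (innerSL ℝ w).hasFDerivAt.comp x hGd.hasFDerivAt
  -- derivative of y ↦ fderiv ℝ u y w
  have h2 : HasFDerivAt (fun y => fderiv ℝ u y w)
      ((fderiv ℝ u x).comp (0 : E →L[ℝ] E)
        + (fderiv ℝ (fderiv ℝ u) x).flip w) x :=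
    ((hF.differentiable one_ne_zero).differentiableAt.hasFDerivAt).clm_apply
      (hasFDerivAt_const w x)
  have heq : (fun y => ⟪w, gradient u y⟫) = fun y => fderiv ℝ u y w := by
    funext y
    rw [real_inner_comm, inner_gradient_eq]
  rw [heq] at h1
  have := h1.unique h2
  have happ : ⟪w, fderiv ℝ (gradient u) x v⟫
      = fderiv ℝ (fderiv ℝ u) x v w := by
    have := congrArg (fun (L : E →L[ℝ] ℝ) => L v) this
    simpa using this
  rw [real_inner_comm, happ, Hess, iteratedFDeriv_two_apply]
  simp

lemma gradient_differentiableAt (hu : ContDiff ℝ 2 u) (x : E) :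
    DifferentiableAt ℝ (gradient u) x := by
  have : ContDiff ℝ 1 (gradient u) :=
    (InnerProductSpace.toDual ℝ E).symm.contDiff.comp (hu.fderiv_right (le_refl _))
  exact (this.differentiable one_ne_zero).differentiableAt

end aux

/-- The divergence-form exponentially harmonic operator expands to the quasilinear
elliptic operator `exp(‖∇u‖²/2)·(Δu + Hess u(∇u,∇u))`; in particular `u` is
exponentially harmonic iff `Δu + Hess u(∇u,∇u) = 0` everywhere. -/
theorem stmt_1 {n : ℕ} (u : EuclideanSpace ℝ (Fin n) → ℝ) (hu : ContDiff ℝ 2 u) :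
    (∀ x, divg (fun y => Real.exp (‖gradient u y‖ ^ 2 / 2) • gradient u y) x
      = Real.exp (‖gradient u x‖ ^ 2 / 2)
        * (lap u x + Hess u x (gradient u x) (gradient u x))) ∧
    ((∀ x, divg (fun y => Real.exp (‖gradient u y‖ ^ 2 / 2) • gradient u y) x = 0)
      ↔ (∀ x, lap u x + Hess u x (gradient u x) (gradient u x) = 0)) := by
  have main : ∀ x, divg (fun y => Real.exp (‖gradient u y‖ ^ 2 / 2) • gradient u y) x
      = Real.exp (‖gradient u x‖ ^ 2 / 2)
        * (lap u x + Hess u x (gradient u x) (gradient u x)) := by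
    intro x
    set G := gradient u with hGdef
    set H := fderiv ℝ G x with hHdef
    set b := EuclideanSpace.basisFun (Fin n) ℝ with hbdef
    have hGd : DifferentiableAt ℝ G x := gradient_differentiableAt u hu x
    have hkey : ∀ v w, ⟪H v, w⟫ = Hess u x v w := fun v w =>
      inner_fderiv_gradient u hu x v w
    -- derivative of y ↦ ⟪G y, G y⟫
    have h1 : HasFDerivAt (fun y => ⟪G y, G y⟫)
        ((fderivInnerCLM ℝ (G x, G x)).comp (H.prod H)) x :=
      hGd.hasFDerivAt.inner ℝ hGd.hasFDerivAt
    have h2 := h1.const_smul ((2 : ℝ)⁻¹)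
    have heqf : (fun y => Real.exp (‖G y‖ ^ 2 / 2))
        = fun y => Real.exp ((2 : ℝ)⁻¹ • ⟪G y, G y⟫) := by
      funext y; rw [real_inner_self_eq_norm_sq, smul_eq_mul]; ring_nf
    have hval : (2 : ℝ)⁻¹ • ⟪G x, G x⟫ = ‖G x‖ ^ 2 / 2 := by
      rw [real_inner_self_eq_norm_sq, smul_eq_mul]; ring
    have hexp : HasFDerivAt (fun y => Real.exp (‖G y‖ ^ 2 / 2))
        (Real.exp (‖G x‖ ^ 2 / 2) •
          ((2 : ℝ)⁻¹ • ((fderivInnerCLM ℝ (G x, G x)).comp (H.prod H)))) x := by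
      rw [heqf]
      have := (Real.hasDerivAt_exp ((2 : ℝ)⁻¹ • ⟪G x, G x⟫)).comp_hasFDerivAt x h2
      rw [hval] at this
      exact this
    have hprod := hexp.smul hGd.hasFDerivAt
    have hd : fderiv ℝ (fun y => Real.exp (‖G y‖ ^ 2 / 2) • G y) x = _ := hprod.fderiv
    rw [divg]
    have hterm : ∀ i : Fin n,
        ⟪fderiv ℝ (fun y => Real.exp (‖G y‖ ^ 2 / 2) • G y) x (b i), b i⟫
        = Real.exp (‖G x‖ ^ 2 / 2) *
            (⟪H (b i), G x⟫ * ⟪G x, b i⟫ + ⟪H (b i), b i⟫) := by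
      intro i
      rw [hd]
      simp only [ContinuousLinearMap.add_apply, ContinuousLinearMap.smulRight_apply,
        ContinuousLinearMap.smul_apply, ContinuousLinearMap.coe_comp', Function.comp_apply,
        fderivInnerCLM_apply, ContinuousLinearMap.prod_apply, inner_add_left,
        inner_smul_left, real_inner_smul_left, smul_eq_mul, conj_trivial]
      rw [real_inner_comm (G x) (H (b i))]
      ring
    rw [Finset.sum_congr rfl (fun i _ => hterm i), ← Finset.mul_sum,
      Finset.sum_add_distrib]
    congr 1
    have hlap : ∑ i, ⟪H (b i), b i⟫ = lap u x :=
      Finset.sum_congr rfl fun i _ => hkey _ _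
    have hexpand : ∑ i, ⟪b i, G x⟫ • b i = G x := b.sum_repr' (G x)
    have hHG : H (G x) = ∑ i, ⟪b i, G x⟫ • H (b i) := by
      conv_lhs => rw [← hexpand]
      rw [map_sum]
      exact Finset.sum_congr rfl fun i _ => H.map_smul _ _
    have hhess : ∑ i, ⟪H (b i), G x⟫ * ⟪G x, b i⟫ = Hess u x (G x) (G x) := by
      rw [← hkey (G x) (G x), hHG, sum_inner]
      refine Finset.sum_congr rfl fun i _ => ?_
      rw [real_inner_smul_left, real_inner_comm (G x) (b i)]
      ring
    rw [hlap, hhess]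
    ring
  refine ⟨main, ?_⟩
  constructor
  · intro h x
    have := h x
    rw [main x] at this
    exact (mul_eq_zero.mp this).resolve_left (Real.exp_ne_zero _)
  · intro h x
    rw [main x, h x, mul_zero]
end

section
/- Let Ω ⊆ EuclideanSpace ℝ (Fin n) be a bounded open set, let u : EuclideanSpace ℝ (Fin n) → ℝ be C¹, and let v : EuclideanSpace ℝ (Fin n) → ℝ be C¹ with compact support contained in Ω. Then the function t ↦ ∫_Ω exp(‖∇u(x) + t∇v(x)‖²/2) dx (Lebesgue integral) is differentiable at t = 0 with derivative ∫_Ω exp(‖∇u(x)‖²/2) ⟪∇u(x), ∇v(x)⟫ dx. (First variation of the exponential energy functional 𝔼(u) = ∫ exp(F*²(Du)/2) dμ.) -/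
open scoped RealInnerProductSpace
open Real MeasureTheory

lemma key_deriv {n : ℕ} (a b : EuclideanSpace ℝ (Fin n)) (t : ℝ) :
    HasDerivAt (fun s : ℝ => Real.exp (‖a + s • b‖ ^ 2 / 2))
      (Real.exp (‖a + t • b‖ ^ 2 / 2) * ⟪a + t • b, b⟫) t := by
  have hnorm : ∀ s : ℝ, ‖a + s • b‖ ^ 2 = ‖a‖ ^ 2 + 2 * s * ⟪a, b⟫ + s ^ 2 * ‖b‖ ^ 2 := by
    intro s
    rw [@norm_add_sq_real, real_inner_smul_right, norm_smul]
    simp [mul_pow, sq_abs]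
    ring
  have hinner : ⟪a + t • b, b⟫ = ⟪a, b⟫ + t * ‖b‖ ^ 2 := by
    rw [inner_add_left, real_inner_smul_left, real_inner_self_eq_norm_sq]
  have hpoly : HasDerivAt (fun s : ℝ => (‖a‖ ^ 2 + 2 * s * ⟪a, b⟫ + s ^ 2 * ‖b‖ ^ 2) / 2)
      (⟪a, b⟫ + t * ‖b‖ ^ 2) t := by
    have h1 : HasDerivAt (fun s : ℝ => ‖a‖ ^ 2 + 2 * s * ⟪a, b⟫ + s ^ 2 * ‖b‖ ^ 2)
        (2 * ⟪a, b⟫ + 2 * t * ‖b‖ ^ 2) t := by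
      have := (((hasDerivAt_id t).const_mul 2).mul_const ⟪a, b⟫).const_add (‖a‖ ^ 2)
      have h2 := (hasDerivAt_pow 2 t).mul_const (‖b‖ ^ 2)
      refine (this.add h2).congr_deriv ?_
      norm_num
    exact (h1.div_const 2).congr_deriv (by ring)
  have := hpoly.exp
  rw [hinner]
  convert this using 2 with s
  · rw [hnorm]
  · rw [hnorm]

/-- First variation of the exponential energy functional on a bounded open set. -/
theorem stmt_2 {n : ℕ} (Ω : Set (EuclideanSpace ℝ (Fin n)))
    (hΩo : IsOpen Ω) (hΩb : Bornology.IsBounded Ω)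
    (u v : EuclideanSpace ℝ (Fin n) → ℝ)
    (hu : ContDiff ℝ 1 u) (hv : ContDiff ℝ 1 v)
    (hvsupp : HasCompactSupport v) (hsupp : tsupport v ⊆ Ω) :
    HasDerivAt
      (fun t : ℝ => ∫ x in Ω, Real.exp (‖gradient u x + t • gradient v x‖ ^ 2 / 2))
      (∫ x in Ω, Real.exp (‖gradient u x‖ ^ 2 / 2) * ⟪gradient u x, gradient v x⟫)
      0 := by
  have hgu : Continuous (gradient u) :=
    (InnerProductSpace.toDual ℝ _).symm.continuous.comp (hu.continuous_fderiv one_ne_zero)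
  have hgv : Continuous (gradient v) :=
    (InnerProductSpace.toDual ℝ _).symm.continuous.comp (hv.continuous_fderiv one_ne_zero)
  obtain ⟨M, hM⟩ := hΩb.isCompact_closure.exists_bound_of_continuousOn hgu.continuousOn
  obtain ⟨K, hK⟩ := hΩb.isCompact_closure.exists_bound_of_continuousOn hgv.continuousOn
  set M' : ℝ := max M 0 with hM'def
  set K' : ℝ := max K 0 with hK'def
  have hMx : ∀ x ∈ Ω, ‖gradient u x‖ ≤ M' := fun x hx =>
    (hM x (subset_closure hx)).trans (le_max_left _ _)
  have hKx : ∀ x ∈ Ω, ‖gradient v x‖ ≤ K' := fun x hx =>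
    (hK x (subset_closure hx)).trans (le_max_left _ _)
  have hμ : volume Ω < ⊤ := hΩb.measure_lt_top
  set F : ℝ → EuclideanSpace ℝ (Fin n) → ℝ :=
    fun t x => Real.exp (‖gradient u x + t • gradient v x‖ ^ 2 / 2) with hF
  set F' : ℝ → EuclideanSpace ℝ (Fin n) → ℝ :=
    fun t x => Real.exp (‖gradient u x + t • gradient v x‖ ^ 2 / 2) *
      ⟪gradient u x + t • gradient v x, gradient v x⟫ with hF'
  have hFcont : ∀ t, Continuous (F t) := fun t =>
    Real.continuous_exp.comp (((hgu.add (hgv.const_smul t)).norm.pow 2).div_const 2)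
  have hF'cont : ∀ t, Continuous (F' t) := fun t =>
    (hFcont t).mul ((hgu.add (hgv.const_smul t)).inner hgv)
  set B : ℝ := Real.exp ((M' + K') ^ 2 / 2) * ((M' + K') * K') with hB
  have hbound : ∀ᵐ x ∂(volume.restrict Ω), ∀ t ∈ Metric.ball (0 : ℝ) 1, ‖F' t x‖ ≤ B := by
    rw [ae_restrict_iff' hΩo.measurableSet]
    refine ae_of_all _ fun x hx t ht => ?_
    have h1 : ‖gradient u x + t • gradient v x‖ ≤ M' + K' := by
      refine (norm_add_le _ _).trans (add_le_add (hMx x hx) ?_)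
      rw [norm_smul]
      calc |t| * ‖gradient v x‖ ≤ 1 * K' := by
            apply mul_le_mul (le_of_lt ?_) (hKx x hx) (norm_nonneg _) zero_le_one
            simpa [Real.norm_eq_abs] using Metric.mem_ball.mp ht
        _ = K' := one_mul _
    have h2 : |⟪gradient u x + t • gradient v x, gradient v x⟫| ≤ (M' + K') * K' := by
      refine (abs_real_inner_le_norm _ _).trans (mul_le_mul h1 (hKx x hx) (norm_nonneg _) ?_)
      positivity
    rw [hF', Real.norm_eq_abs, abs_mul, Real.abs_exp]
    refine mul_le_mul ?_ h2 (abs_nonneg _) (Real.exp_pos _).le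
    apply Real.exp_le_exp.mpr
    gcongr
  have hBint : Integrable (fun _ => B) (volume.restrict Ω) :=
    integrableOn_const hμ.ne
  have hFint : Integrable (F 0) (volume.restrict Ω) := by
    refine Integrable.mono' (g := fun _ => Real.exp ((M' + K') ^ 2 / 2))
      (integrableOn_const hμ.ne) ((hFcont 0).aestronglyMeasurable) ?_
    rw [ae_restrict_iff' hΩo.measurableSet]
    refine ae_of_all _ fun x hx => ?_
    rw [hF, Real.norm_eq_abs, Real.abs_exp]
    have h1 : ‖gradient u x + (0:ℝ) • gradient v x‖ ≤ M' + K' := by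
      simp only [zero_smul, add_zero]
      exact (hMx x hx).trans (le_add_of_nonneg_right (le_max_right _ _))
    apply Real.exp_le_exp.mpr
    gcongr
  have hdiff : ∀ᵐ x ∂(volume.restrict Ω), ∀ t ∈ Metric.ball (0 : ℝ) 1,
      HasDerivAt (F · x) (F' t x) t :=
    ae_of_all _ fun x t _ => key_deriv (gradient u x) (gradient v x) t
  have hmain := hasDerivAt_integral_of_dominated_loc_of_deriv_le (μ := volume.restrict Ω)
    (Metric.ball_mem_nhds 0 one_pos) (Filter.Eventually.of_forall fun t => (hFcont t).aestronglyMeasurable)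
    hFint ((hF'cont 0).aestronglyMeasurable) hbound hBint hdiff
  have heq : (∫ x in Ω, F' 0 x) =
      ∫ x in Ω, Real.exp (‖gradient u x‖ ^ 2 / 2) * ⟪gradient u x, gradient v x⟫ := by
    refine integral_congr_ae (ae_of_all _ fun x => ?_)
    simp [hF']
  rw [← heq]
  exact hmain.2
end

section
/- (Bochner-type formula for exponentially harmonic functions, flat case.) Let u : EuclideanSpace ℝ (Fin n) → ℝ be C³ and satisfy Δu(x) + Hess u(x)(∇u(x), ∇u(x)) = 0 for all x (exponential harmonicity). Set e(x) := ‖∇u(x)‖². Then for every x: Δe(x) + Hess e(x)(∇u(x), ∇u(x)) = 2‖Hess u(x)‖²_HS − (1/2)‖∇e(x)‖², where ‖Hess u(x)‖²_HS := ∑ᵢⱼ (Hess u(x)(eᵢ, eⱼ))². -/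
open scoped RealInnerProductSpace
open Real MeasureTheory

/- ## Auxiliary algebraic lemma -/

private lemma alg {n : ℕ} (G : Fin n → ℝ) (H : Fin n → Fin n → ℝ) (T : Fin n → Fin n → Fin n → ℝ)
    (hH : ∀ i j, H i j = H j i)
    (hT : ∀ i j k, T i j k = T k i j)
    (hharm : ∀ k, (∑ i, T k i i)
      + ∑ i, ∑ j, (H k i * G j * H i j + G i * H k j * H i j + G i * G j * T k i j) = 0) :
    (∑ i, ∑ k, (2 * (H i k * H i k) + 2 * G k * T i i k))
      + (∑ k, (2 * ((∑ i, G i * H i k) * (∑ j, G j * H j k))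
          + 2 * G k * (∑ i, ∑ j, G i * G j * T i j k)))
    = 2 * (∑ i, ∑ j, (H i j)^2) - (1/2) * ∑ k, (∑ i, 2 * G i * H k i)^2 := by
  set A : ℝ := ∑ i, (∑ k, G k * H k i) * (∑ j, G j * H j i) with hA
  have e1 : ∑ i, ∑ k, (2 * (H i k * H i k) + 2 * G k * T i i k)
      = 2 * (∑ i, ∑ j, (H i j)^2) + 2 * ∑ k, G k * ∑ i, T k i i := by
    rw [Finset.mul_sum]
    rw [show (2:ℝ) * ∑ k, G k * ∑ i, T k i i = ∑ k, ∑ i, 2 * G k * T i i k by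
      rw [Finset.mul_sum]; refine Finset.sum_congr rfl fun k _ => ?_
      rw [Finset.mul_sum, Finset.mul_sum]; exact Finset.sum_congr rfl fun i _ => by rw [hT i i k]; ring]
    rw [Finset.sum_comm (f := fun k i => 2 * G k * T i i k)]
    rw [← Finset.sum_add_distrib]
    refine Finset.sum_congr rfl fun i _ => ?_
    rw [Finset.mul_sum, ← Finset.sum_add_distrib]
    exact Finset.sum_congr rfl fun k _ => by ring
  have e2 : ∑ k, (∑ i, 2 * G i * H k i)^2 = 4 * A := by
    rw [hA, Finset.mul_sum]
    refine Finset.sum_congr rfl fun k _ => ?_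
    rw [show ∑ i, 2 * G i * H k i = 2 * ∑ i, G i * H i k by
      rw [Finset.mul_sum]; exact Finset.sum_congr rfl fun i _ => by rw [hH k i]; ring]
    ring
  have e2' : ∑ k, (∑ i, G i * H i k) * (∑ j, G j * H j k) = A := by rw [hA]
  have key1 : ∀ k, ∑ i, ∑ j, (H k i * G j * H i j) = ∑ i, H k i * ∑ j, G j * H j i := by
    intro k; refine Finset.sum_congr rfl fun i _ => ?_
    rw [Finset.mul_sum]; exact Finset.sum_congr rfl fun j _ => by rw [hH i j]; ring
  have key2 : ∀ k, ∑ i, ∑ j, (G i * H k j * H i j) = ∑ j, H k j * ∑ i, G i * H i j := by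
    intro k
    rw [Finset.sum_comm]
    refine Finset.sum_congr rfl fun j _ => ?_
    rw [Finset.mul_sum]; exact Finset.sum_congr rfl fun i _ => by ring
  have key1' : ∑ k, G k * ∑ i, H k i * ∑ j, G j * H j i = A := by
    rw [show (∑ k, G k * ∑ i, H k i * ∑ j, G j * H j i)
        = ∑ k, ∑ i, G k * H k i * (∑ j, G j * H j i) from
      Finset.sum_congr rfl fun k _ => by
        rw [Finset.mul_sum]; exact Finset.sum_congr rfl fun i _ => by ring]
    rw [Finset.sum_comm, hA]
    exact Finset.sum_congr rfl fun i _ => by rw [Finset.sum_mul]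
  have hh : ∀ k, ∑ i, T k i i + ∑ i, ∑ j, G i * G j * T k i j
      = -(2 * (∑ i, H k i * ∑ j, G j * H j i)) := by
    intro k
    have h0 := hharm k
    rw [show (∑ i, ∑ j, (H k i * G j * H i j + G i * H k j * H i j + G i * G j * T k i j))
        = (∑ i, ∑ j, H k i * G j * H i j) + (∑ i, ∑ j, G i * H k j * H i j)
          + ∑ i, ∑ j, G i * G j * T k i j by
      rw [← Finset.sum_add_distrib, ← Finset.sum_add_distrib]
      refine Finset.sum_congr rfl fun i _ => ?_
      rw [← Finset.sum_add_distrib, ← Finset.sum_add_distrib]] at h0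
    rw [key1, key2] at h0
    linarith
  have e3 : ∑ k, 2 * G k * (∑ i, ∑ j, G i * G j * T i j k)
      = ∑ k, 2 * G k * (∑ i, ∑ j, G i * G j * T k i j) := by
    refine Finset.sum_congr rfl fun k _ => ?_
    congr 1
    exact Finset.sum_congr rfl fun i _ => Finset.sum_congr rfl fun j _ => by rw [hT i j k]
  calc (∑ i, ∑ k, (2 * (H i k * H i k) + 2 * G k * T i i k))
      + (∑ k, (2 * ((∑ i, G i * H i k) * (∑ j, G j * H j k))
          + 2 * G k * (∑ i, ∑ j, G i * G j * T i j k)))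
      = 2 * (∑ i, ∑ j, (H i j)^2) + 2 * A
        + ∑ k, 2 * G k * ((∑ i, T k i i) + ∑ i, ∑ j, G i * G j * T k i j) := by
        rw [e1, Finset.sum_add_distrib, e3]
        rw [show ∑ k, 2 * ((∑ i, G i * H i k) * (∑ j, G j * H j k)) = 2 * A by
          rw [← e2', Finset.mul_sum]]
        rw [show ∑ k, 2 * G k * ((∑ i, T k i i) + ∑ i, ∑ j, G i * G j * T k i j)
            = ∑ k, 2 * G k * (∑ i, T k i i) + ∑ k, 2 * G k * (∑ i, ∑ j, G i * G j * T k i j) by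
          rw [← Finset.sum_add_distrib]; exact Finset.sum_congr rfl fun k _ => by ring]
        rw [show (2:ℝ) * ∑ k, G k * ∑ i, T k i i = ∑ k, 2 * G k * (∑ i, T k i i) by
          rw [Finset.mul_sum]; exact Finset.sum_congr rfl fun k _ => by ring]
        ring
    _ = 2 * (∑ i, ∑ j, (H i j)^2) + 2 * A
        + ∑ k, 2 * G k * (-(2 * (∑ i, H k i * ∑ j, G j * H j i))) := by
        congr 1
        exact Finset.sum_congr rfl fun k _ => by rw [hh k]
    _ = 2 * (∑ i, ∑ j, (H i j)^2) + 2 * A - 4 * A := by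
        rw [show ∑ k, 2 * G k * (-(2 * (∑ i, H k i * ∑ j, G j * H j i)))
            = -4 * ∑ k, G k * ∑ i, H k i * ∑ j, G j * H j i by
          rw [Finset.mul_sum]; exact Finset.sum_congr rfl fun k _ => by ring]
        rw [key1']; ring
    _ = 2 * (∑ i, ∑ j, (H i j)^2) - (1/2) * ∑ k, (∑ i, 2 * G i * H k i)^2 := by
        rw [e2]; ring

/- ## Calculus infrastructure -/

section Aux
variable {n : ℕ}

private noncomputable def bb (n : ℕ) (i : Fin n) : EuclideanSpace ℝ (Fin n) :=
  EuclideanSpace.single i 1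

private lemma clmApply {F G : Type*} [NormedAddCommGroup F] [NormedSpace ℝ F]
    [NormedAddCommGroup G] [NormedSpace ℝ G]
    {Φ : EuclideanSpace ℝ (Fin n) → (F →L[ℝ] G)} {x : EuclideanSpace ℝ (Fin n)}
    {Φ' : EuclideanSpace ℝ (Fin n) →L[ℝ] (F →L[ℝ] G)} (hΦ : HasFDerivAt Φ Φ' x) (w : F) :
    HasFDerivAt (fun y => Φ y w) (Φ'.flip w) x := by
  simpa using hΦ.clm_apply (hasFDerivAt_const w x)

private lemma hess_eq (f : EuclideanSpace ℝ (Fin n) → ℝ) (x v w) :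
    Hess f x v w = fderiv ℝ (fderiv ℝ f) x v w := by
  rw [Hess, iteratedFDeriv_two_apply]
  simp

private lemma grad_coord (f : EuclideanSpace ℝ (Fin n) → ℝ) (x : EuclideanSpace ℝ (Fin n))
    (k : Fin n) : gradient f x k = fderiv ℝ f x (bb n k) := by
  have : ⟪gradient f x, bb n k⟫ = fderiv ℝ f x (bb n k) := by
    simp [gradient, InnerProductSpace.toDual_symm_apply]
  rw [← this, bb]
  simp [EuclideanSpace.inner_single_right, -inner_gradient_left]

private lemma grad_expand (f : EuclideanSpace ℝ (Fin n) → ℝ) (x : EuclideanSpace ℝ (Fin n)) :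
    gradient f x = ∑ i, fderiv ℝ f x (bb n i) • bb n i := by
  have h := (EuclideanSpace.basisFun (Fin n) ℝ).sum_repr (gradient f x)
  rw [← h]
  refine Finset.sum_congr rfl fun i _ => ?_
  rw [EuclideanSpace.basisFun_repr, grad_coord]
  congr 1
  rw [bb, EuclideanSpace.basisFun_apply]

private lemma norm_sq_expand (y : EuclideanSpace ℝ (Fin n)) : ‖y‖^2 = ∑ i, (y i)^2 := by
  rw [← real_inner_self_eq_norm_sq]
  simp only [PiLp.inner_apply, sq, RCLike.inner_apply, conj_trivial]

private lemma lin_expand (f : EuclideanSpace ℝ (Fin n) → ℝ)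
    (B : EuclideanSpace ℝ (Fin n) →L[ℝ] EuclideanSpace ℝ (Fin n) →L[ℝ] ℝ)
    (y : EuclideanSpace ℝ (Fin n)) (z : EuclideanSpace ℝ (Fin n)) :
    B (gradient f y) z = ∑ i, fderiv ℝ f y (bb n i) * B (bb n i) z := by
  simp only [grad_expand f y, map_sum, _root_.map_smul, ContinuousLinearMap.sum_apply,
    ContinuousLinearMap.smul_apply, smul_eq_mul]

private lemma bilin_expand (f : EuclideanSpace ℝ (Fin n) → ℝ)
    (B : EuclideanSpace ℝ (Fin n) →L[ℝ] EuclideanSpace ℝ (Fin n) →L[ℝ] ℝ)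
    (y : EuclideanSpace ℝ (Fin n)) :
    B (gradient f y) (gradient f y)
      = ∑ i, ∑ j, fderiv ℝ f y (bb n i) * fderiv ℝ f y (bb n j) * B (bb n i) (bb n j) := by
  simp only [grad_expand f y, map_sum, _root_.map_smul, ContinuousLinearMap.sum_apply,
    ContinuousLinearMap.smul_apply, smul_eq_mul]
  refine Eq.trans (Finset.sum_congr rfl fun i _ => by rw [Finset.mul_sum]) ?_
  rw [Finset.sum_comm]
  exact Finset.sum_congr rfl fun i _ => Finset.sum_congr rfl fun j _ => by ring

private lemma bilin_expand3 (f : EuclideanSpace ℝ (Fin n) → ℝ)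
    (B : EuclideanSpace ℝ (Fin n) →L[ℝ] EuclideanSpace ℝ (Fin n) →L[ℝ]
          EuclideanSpace ℝ (Fin n) →L[ℝ] ℝ)
    (y z : EuclideanSpace ℝ (Fin n)) :
    B (gradient f y) (gradient f y) z
      = ∑ i, ∑ j, fderiv ℝ f y (bb n i) * fderiv ℝ f y (bb n j) * B (bb n i) (bb n j) z := by
  simp only [grad_expand f y, map_sum, _root_.map_smul, ContinuousLinearMap.sum_apply,
    ContinuousLinearMap.smul_apply, smul_eq_mul]
  refine Eq.trans (Finset.sum_congr rfl fun i _ => by rw [Finset.mul_sum]) ?_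
  rw [Finset.sum_comm]
  exact Finset.sum_congr rfl fun i _ => Finset.sum_congr rfl fun j _ => by ring

variable {u : EuclideanSpace ℝ (Fin n) → ℝ} (hu : ContDiff ℝ 3 u)
include hu

private lemma hd1 : ∀ x, HasFDerivAt u (fderiv ℝ u x) x := fun x =>
  ((hu.differentiable (by norm_num)) x).hasFDerivAt

private lemma hcd2 : ContDiff ℝ 2 (fderiv ℝ u) := hu.fderiv_right (by norm_num)

private lemma hd2 : ∀ x, HasFDerivAt (fderiv ℝ u) (fderiv ℝ (fderiv ℝ u) x) x := fun x =>
  (((hcd2 hu).differentiable (by norm_num)) x).hasFDerivAt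

private lemma hcd3 : ContDiff ℝ 1 (fderiv ℝ (fderiv ℝ u)) := (hcd2 hu).fderiv_right (by norm_num)

private lemma hd3 : ∀ x, HasFDerivAt (fderiv ℝ (fderiv ℝ u))
    (fderiv ℝ (fderiv ℝ (fderiv ℝ u)) x) x := fun x =>
  (((hcd3 hu).differentiable (by norm_num)) x).hasFDerivAt

private lemma symm2 (x v w) :
    fderiv ℝ (fderiv ℝ u) x v w = fderiv ℝ (fderiv ℝ u) x w v :=
  second_derivative_symmetric (hd1 hu) (hd2 hu x) v w

private lemma symm3a (x a b c) :
    fderiv ℝ (fderiv ℝ (fderiv ℝ u)) x a b c = fderiv ℝ (fderiv ℝ (fderiv ℝ u)) x b a c := by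
  have h := second_derivative_symmetric (hd2 hu) (hd3 hu x) a b
  exact DFunLike.congr_fun h c

private lemma symm3b (x a b c) :
    fderiv ℝ (fderiv ℝ (fderiv ℝ u)) x a b c = fderiv ℝ (fderiv ℝ (fderiv ℝ u)) x a c b := by
  have h1 : HasFDerivAt (fun y => fderiv ℝ (fderiv ℝ u) y b c)
      (((fderiv ℝ (fderiv ℝ (fderiv ℝ u)) x).flip b).flip c) x :=
    clmApply (clmApply (hd3 hu x) b) c
  have h2 : HasFDerivAt (fun y => fderiv ℝ (fderiv ℝ u) y c b)
      (((fderiv ℝ (fderiv ℝ (fderiv ℝ u)) x).flip c).flip b) x :=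
    clmApply (clmApply (hd3 hu x) c) b
  have hfun : (fun y => fderiv ℝ (fderiv ℝ u) y b c) = (fun y => fderiv ℝ (fderiv ℝ u) y c b) :=
    funext fun y => symm2 hu y b c
  rw [hfun] at h1
  have := h1.unique h2
  exact DFunLike.congr_fun this a

private lemma symm3 (x a b c) :
    fderiv ℝ (fderiv ℝ (fderiv ℝ u)) x a b c = fderiv ℝ (fderiv ℝ (fderiv ℝ u)) x c a b := by
  rw [symm3b hu x a b c, symm3a hu x a c b]

/-- first derivative of `e` (as the explicit sum-of-squares function). -/
private lemma fderivE (y v : EuclideanSpace ℝ (Fin n)) :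
    fderiv ℝ (fun x => ∑ k, (fderiv ℝ u x (bb n k))^2) y v
      = ∑ k, 2 * fderiv ℝ u y (bb n k) * fderiv ℝ (fderiv ℝ u) y v (bb n k) := by
  have hfun : (fun x : EuclideanSpace ℝ (Fin n) => ∑ k, (fderiv ℝ u x (bb n k))^2)
      = fun x => ∑ k, fderiv ℝ u x (bb n k) * fderiv ℝ u x (bb n k) := by
    funext x; exact Finset.sum_congr rfl fun k _ => sq (fderiv ℝ u x (bb n k))
  rw [hfun]
  have h : HasFDerivAt (fun x => ∑ k, fderiv ℝ u x (bb n k) * fderiv ℝ u x (bb n k))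
      (∑ k, (fderiv ℝ u y (bb n k) • ((fderiv ℝ (fderiv ℝ u) y).flip (bb n k))
           + fderiv ℝ u y (bb n k) • ((fderiv ℝ (fderiv ℝ u) y).flip (bb n k)))) y :=
    HasFDerivAt.fun_sum fun k _ => (clmApply (hd2 hu y) (bb n k)).mul (clmApply (hd2 hu y) (bb n k))
  rw [h.fderiv]
  simp only [ContinuousLinearMap.sum_apply, ContinuousLinearMap.add_apply,
    ContinuousLinearMap.smul_apply, ContinuousLinearMap.flip_apply, smul_eq_mul]
  exact Finset.sum_congr rfl fun k _ => by ring

private lemma ee_contDiff : ContDiff ℝ 2 (fun x => ∑ k, (fderiv ℝ u x (bb n k))^2) :=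
  ContDiff.sum fun k _ => ((hcd2 hu).clm_apply contDiff_const).pow 2

/-- second derivative of `e`. -/
private lemma hessEE (x v w : EuclideanSpace ℝ (Fin n)) :
    fderiv ℝ (fderiv ℝ (fun y => ∑ k, (fderiv ℝ u y (bb n k))^2)) x v w
      = ∑ k, (2 * (fderiv ℝ (fderiv ℝ u) x v (bb n k) * fderiv ℝ (fderiv ℝ u) x w (bb n k))
          + 2 * fderiv ℝ u x (bb n k) * fderiv ℝ (fderiv ℝ (fderiv ℝ u)) x v w (bb n k)) := by
  set ee := fun y => ∑ k, (fderiv ℝ u y (bb n k))^2 with hee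
  have hFe : HasFDerivAt (fderiv ℝ ee) (fderiv ℝ (fderiv ℝ ee) x) x := by
    have : ContDiff ℝ 1 (fderiv ℝ ee) := (ee_contDiff hu).fderiv_right (by norm_num)
    exact ((this.differentiable one_ne_zero) x).hasFDerivAt
  have h1 : HasFDerivAt (fun y => fderiv ℝ ee y w)
      ((fderiv ℝ (fderiv ℝ ee) x).flip w) x := clmApply hFe w
  have h2 : HasFDerivAt
      (fun y => ∑ k, 2 * fderiv ℝ u y (bb n k) * fderiv ℝ (fderiv ℝ u) y w (bb n k))
      (∑ k, ((2 * fderiv ℝ u x (bb n k)) •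
          (((fderiv ℝ (fderiv ℝ (fderiv ℝ u)) x).flip w).flip (bb n k))
        + (fderiv ℝ (fderiv ℝ u) x w (bb n k)) •
          ((2:ℝ) • ((fderiv ℝ (fderiv ℝ u) x).flip (bb n k))))) x :=
    HasFDerivAt.fun_sum (fun k _ =>
      HasFDerivAt.mul ((clmApply (hd2 hu x) (bb n k)).const_mul (2:ℝ))
        (clmApply (clmApply (hd3 hu x) w) (bb n k)))
  have hfun : (fun y => fderiv ℝ ee y w)
      = (fun y => ∑ k, 2 * fderiv ℝ u y (bb n k) * fderiv ℝ (fderiv ℝ u) y w (bb n k)) :=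
    funext fun y => fderivE hu y w
  rw [hfun] at h1
  have heq := h1.unique h2
  have : fderiv ℝ (fderiv ℝ ee) x v w = ((fderiv ℝ (fderiv ℝ ee) x).flip w) v := rfl
  rw [this, heq]
  simp only [ContinuousLinearMap.sum_apply, ContinuousLinearMap.add_apply,
    ContinuousLinearMap.smul_apply, ContinuousLinearMap.flip_apply, smul_eq_mul]
  exact Finset.sum_congr rfl fun k _ => by ring

private lemma harm_deriv
    (hharm : ∀ x, lap u x + Hess u x (gradient u x) (gradient u x) = 0)
    (x : EuclideanSpace ℝ (Fin n)) (k : Fin n) :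
    (∑ i, fderiv ℝ (fderiv ℝ (fderiv ℝ u)) x (bb n k) (bb n i) (bb n i))
      + ∑ i, ∑ j,
        (fderiv ℝ (fderiv ℝ u) x (bb n k) (bb n i) * fderiv ℝ u x (bb n j)
            * fderiv ℝ (fderiv ℝ u) x (bb n i) (bb n j)
          + fderiv ℝ u x (bb n i) * fderiv ℝ (fderiv ℝ u) x (bb n k) (bb n j)
            * fderiv ℝ (fderiv ℝ u) x (bb n i) (bb n j)
          + fderiv ℝ u x (bb n i) * fderiv ℝ u x (bb n j)
            * fderiv ℝ (fderiv ℝ (fderiv ℝ u)) x (bb n k) (bb n i) (bb n j)) = 0 := by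
  have hb : ∀ i : Fin n, (EuclideanSpace.basisFun (Fin n) ℝ) i = bb n i := fun i => by
    rw [bb, EuclideanSpace.basisFun_apply]
  have hQ0 : (fun y => (∑ i, fderiv ℝ (fderiv ℝ u) y (bb n i) (bb n i))
      + ∑ i, ∑ j, fderiv ℝ u y (bb n i) * fderiv ℝ u y (bb n j)
          * fderiv ℝ (fderiv ℝ u) y (bb n i) (bb n j)) = (fun _ => (0:ℝ)) := by
    funext y
    have h := hharm y
    simp only [lap, hb, hess_eq] at h
    rw [bilin_expand u (fderiv ℝ (fderiv ℝ u) y) y] at h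
    exact h
  have hQc : HasFDerivAt (fun _ : EuclideanSpace ℝ (Fin n) => (0:ℝ))
      (0 : EuclideanSpace ℝ (Fin n) →L[ℝ] ℝ) x := hasFDerivAt_const (0:ℝ) x
  rw [← hQ0] at hQc
  have hQd := HasFDerivAt.add
    (HasFDerivAt.fun_sum (u := Finset.univ)
      (fun i _ => clmApply (clmApply (hd3 hu x) (bb n i)) (bb n i)))
    (HasFDerivAt.fun_sum (u := Finset.univ) (fun i _ => HasFDerivAt.fun_sum (u := Finset.univ)
      (fun j _ => HasFDerivAt.mul
        ((clmApply (hd2 hu x) (bb n i)).mul (clmApply (hd2 hu x) (bb n j)))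
        (clmApply (clmApply (hd3 hu x) (bb n i)) (bb n j)))))
  have h0 := hQd.unique hQc
  have h1 := DFunLike.congr_fun h0 (bb n k)
  rw [ContinuousLinearMap.zero_apply] at h1
  rw [← h1]
  simp only [ContinuousLinearMap.add_apply, ContinuousLinearMap.sum_apply,
    ContinuousLinearMap.smul_apply, ContinuousLinearMap.flip_apply, smul_eq_mul]
  congr 1
  exact Finset.sum_congr rfl fun i _ => Finset.sum_congr rfl fun j _ => by simp only [Pi.mul_apply]; ring

end Aux

/-- Bochner-type formula for exponentially harmonic functions (flat case). -/
theorem stmt_4 {n : ℕ} (u : EuclideanSpace ℝ (Fin n) → ℝ) (hu : ContDiff ℝ 3 u)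
    (hharm : ∀ x, lap u x + Hess u x (gradient u x) (gradient u x) = 0)
    (e : EuclideanSpace ℝ (Fin n) → ℝ) (he : e = fun x => ‖gradient u x‖ ^ 2) :
    ∀ x, lap e x + Hess e x (gradient u x) (gradient u x)
      = 2 * (∑ i, ∑ j, (Hess u x (EuclideanSpace.basisFun (Fin n) ℝ i)
            (EuclideanSpace.basisFun (Fin n) ℝ j)) ^ 2)
        - (1 / 2) * ‖gradient e x‖ ^ 2 := by
  intro x
  have hb : ∀ i : Fin n, (EuclideanSpace.basisFun (Fin n) ℝ) i = bb n i := fun i => by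
    rw [bb, EuclideanSpace.basisFun_apply]
  have hee : e = fun y => ∑ k, (fderiv ℝ u y (bb n k))^2 := by
    rw [he]; funext y
    rw [norm_sq_expand]
    exact Finset.sum_congr rfl fun k _ => by rw [grad_coord]
  have hHe : ∀ v w, Hess e x v w
      = ∑ k, (2 * (fderiv ℝ (fderiv ℝ u) x v (bb n k) * fderiv ℝ (fderiv ℝ u) x w (bb n k))
          + 2 * fderiv ℝ u x (bb n k) * fderiv ℝ (fderiv ℝ (fderiv ℝ u)) x v w (bb n k)) := by
    intro v w
    rw [hess_eq, hee]
    exact hessEE hu x v w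
  have P1 : lap e x = ∑ i, ∑ k,
      (2 * (fderiv ℝ (fderiv ℝ u) x (bb n i) (bb n k) * fderiv ℝ (fderiv ℝ u) x (bb n i) (bb n k))
        + 2 * fderiv ℝ u x (bb n k)
          * fderiv ℝ (fderiv ℝ (fderiv ℝ u)) x (bb n i) (bb n i) (bb n k)) := by
    rw [lap]
    simp only [hb]
    exact Finset.sum_congr rfl fun i _ => hHe _ _
  have P2 : Hess e x (gradient u x) (gradient u x)
      = ∑ k, (2 * ((∑ i, fderiv ℝ u x (bb n i) * fderiv ℝ (fderiv ℝ u) x (bb n i) (bb n k))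
            * (∑ j, fderiv ℝ u x (bb n j) * fderiv ℝ (fderiv ℝ u) x (bb n j) (bb n k)))
          + 2 * fderiv ℝ u x (bb n k) * (∑ i, ∑ j, fderiv ℝ u x (bb n i) * fderiv ℝ u x (bb n j)
            * fderiv ℝ (fderiv ℝ (fderiv ℝ u)) x (bb n i) (bb n j) (bb n k))) := by
    rw [hHe]
    refine Finset.sum_congr rfl fun k _ => ?_
    rw [lin_expand u (fderiv ℝ (fderiv ℝ u) x) x (bb n k),
      bilin_expand3 u (fderiv ℝ (fderiv ℝ (fderiv ℝ u)) x) x (bb n k)]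
  have P3 : ‖gradient e x‖^2 = ∑ k, (∑ i, 2 * fderiv ℝ u x (bb n i)
      * fderiv ℝ (fderiv ℝ u) x (bb n k) (bb n i))^2 := by
    rw [norm_sq_expand]
    refine Finset.sum_congr rfl fun k _ => ?_
    rw [grad_coord, hee, fderivE hu x (bb n k)]
  have P4 : ∀ i j : Fin n, Hess u x (EuclideanSpace.basisFun (Fin n) ℝ i)
      (EuclideanSpace.basisFun (Fin n) ℝ j) = fderiv ℝ (fderiv ℝ u) x (bb n i) (bb n j) := by
    intro i j; rw [hb, hb, hess_eq]
  rw [P1, P2, P3]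
  simp only [P4]
  exact alg (fun i => fderiv ℝ u x (bb n i))
    (fun i j => fderiv ℝ (fderiv ℝ u) x (bb n i) (bb n j))
    (fun i j k => fderiv ℝ (fderiv ℝ (fderiv ℝ u)) x (bb n i) (bb n j) (bb n k))
    (fun i j => symm2 hu x _ _)
    (fun i j k => symm3 hu x _ _ _)
    (fun k => harm_deriv hu hharm x k)
end

section
/- Let u : EuclideanSpace ℝ (Fin n) → ℝ be C² and satisfy Δu(x) + Hess u(x)(∇u(x), ∇u(x)) = 0 for all x (exponential harmonicity), and let φ : ℝ → ℝ be C². Set e(x) := ‖∇u(x)‖². Then for every x: Δ(φ∘u)(x) + Hess(φ∘u)(x)(∇u(x), ∇u(x)) = φ''(u(x)) · (e(x) + e(x)²). -/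
open scoped RealInnerProductSpace
open Real MeasureTheory

/-- For an exponentially harmonic `u` and a C² function `φ : ℝ → ℝ`,
`Δ̂(φ∘u) = φ''(u)(e(u) + e(u)²)` (flat case). -/
theorem stmt_5 {n : ℕ} (u : EuclideanSpace ℝ (Fin n) → ℝ) (hu : ContDiff ℝ 2 u)
    (hharm : ∀ x, lap u x + Hess u x (gradient u x) (gradient u x) = 0)
    (φ : ℝ → ℝ) (hφ : ContDiff ℝ 2 φ)
    (e : EuclideanSpace ℝ (Fin n) → ℝ) (he : e = fun x => ‖gradient u x‖ ^ 2) :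
    ∀ x, lap (φ ∘ u) x + Hess (φ ∘ u) x (gradient u x) (gradient u x)
      = deriv (deriv φ) (u x) * (e x + e x ^ 2) := by
  intro x
  have hud : Differentiable ℝ u := hu.differentiable two_ne_zero
  have hφd : Differentiable ℝ φ := hφ.differentiable two_ne_zero
  have hφ' : ContDiff ℝ 1 (deriv φ) := by
    have : ContDiff ℝ ((1 : ℕ) + 1) φ := by norm_num [hφ]
    exact (contDiff_succ_iff_deriv.mp this).2.2
  have hφ'd : Differentiable ℝ (deriv φ) := hφ'.differentiable one_ne_zero
  have hu' : ContDiff ℝ 1 (fderiv ℝ u) := hu.fderiv_right (by norm_num)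
  have hu'd : Differentiable ℝ (fderiv ℝ u) := hu'.differentiable one_ne_zero
  -- first derivative of the composition
  have hcomp : (fun y => fderiv ℝ (φ ∘ u) y) = fun y => deriv φ (u y) • fderiv ℝ u y := by
    funext y
    rw [fderiv_comp y (hφd (u y)) (hud y)]
    ext v
    simp only [ContinuousLinearMap.comp_apply, ContinuousLinearMap.smul_apply, smul_eq_mul]
    rw [show (fderiv ℝ u y v : ℝ) = (fderiv ℝ u y v) • (1 : ℝ) by simp, _root_.map_smul, fderiv_apply_one_eq_deriv]
    simp [mul_comm]
  -- second derivative of the composition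
  set L := fderiv ℝ u x with hL
  set D := fderiv ℝ (fderiv ℝ u) x with hD
  have h1 : HasFDerivAt (fun y => deriv φ (u y)) ((deriv (deriv φ) (u x)) • L) x :=
    (hφ'd (u x)).hasDerivAt.comp_hasFDerivAt x (hud x).hasFDerivAt
  have h2 : HasFDerivAt (fderiv ℝ u) D x := (hu'd x).hasFDerivAt
  have hsmul : HasFDerivAt (fun y => deriv φ (u y) • fderiv ℝ u y)
      (deriv φ (u x) • D + ((deriv (deriv φ) (u x)) • L).smulRight L) x := h1.smul h2
  have hfd2 : fderiv ℝ (fderiv ℝ (φ ∘ u)) x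
      = deriv φ (u x) • D + ((deriv (deriv φ) (u x)) • L).smulRight L := by
    rw [show fderiv ℝ (φ ∘ u) = fun y => deriv φ (u y) • fderiv ℝ u y from hcomp]
    exact hsmul.fderiv
  have hkey : ∀ v w, Hess (φ ∘ u) x v w
      = deriv (deriv φ) (u x) * (L v * L w) + deriv φ (u x) * Hess u x v w := by
    intro v w
    simp only [Hess, iteratedFDeriv_two_apply, Matrix.cons_val_zero, Matrix.cons_val_one,
      Matrix.head_cons, hfd2]
    simp only [ContinuousLinearMap.add_apply, ContinuousLinearMap.smul_apply,
      ContinuousLinearMap.smulRight_apply, smul_eq_mul]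
    ring
  set g := gradient u x with hg
  have hgrad : ∀ v, L v = ⟪g, v⟫ := fun v =>
    (InnerProductSpace.toDual_symm_apply (𝕜 := ℝ)).symm
  have hE : e x = ⟪g, g⟫ := by simp only [he]; exact (real_inner_self_eq_norm_sq g).symm
  have hsum : ∑ i, L (EuclideanSpace.basisFun (Fin n) ℝ i) * L (EuclideanSpace.basisFun (Fin n) ℝ i)
      = e x := by
    rw [hE]
    simp only [hgrad, EuclideanSpace.basisFun_apply, EuclideanSpace.inner_single_right,
      RCLike.inner_apply, PiLp.inner_apply]
    simp [mul_comm]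
  have hlap : lap (φ ∘ u) x = deriv (deriv φ) (u x) * e x + deriv φ (u x) * lap u x := by
    simp only [lap, hkey, Finset.sum_add_distrib, ← Finset.mul_sum, hsum]
  have hHgg : Hess (φ ∘ u) x g g
      = deriv (deriv φ) (u x) * (e x * e x) + deriv φ (u x) * Hess u x g g := by
    rw [hkey, hgrad, ← hE]
  have hh := hharm x
  rw [hlap, hHgg]
  rw [show lap u x = - Hess u x g g by linarith]
  ring
end

section
/- Let u : EuclideanSpace ℝ (Fin n) → ℝ be C³ and satisfy Δu(x) + Hess u(x)(∇u(x), ∇u(x)) = 0 for all x (exponential harmonicity). Set e(x) := ‖∇u(x)‖². Then at every point x where e(x) > 0: Δe(x) + Hess e(x)(∇u(x), ∇u(x)) ≥ (1 − e(x)) · ‖∇e(x)‖² / (2 e(x)). -/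
open scoped RealInnerProductSpace
open Real MeasureTheory

section Stmt6Aux

open InnerProductSpace

variable {n : ℕ} {u : EuclideanSpace ℝ (Fin n) → ℝ}

local notation "E'" => EuclideanSpace ℝ (Fin n)

/-- fderiv of a clm-valued function applied to a constant. -/
lemma clm_apply_const {F G : Type*} [NormedAddCommGroup F] [NormedSpace ℝ F]
    [NormedAddCommGroup G] [NormedSpace ℝ G]
    {c : E' → (F →L[ℝ] G)} {x : E'} (hc : DifferentiableAt ℝ c x) (b : F) (a : E') :
    fderiv ℝ (fun y => c y b) x a = fderiv ℝ c x a b := by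
  rw [fderiv_clm_apply hc (differentiableAt_const b)]
  simp

lemma contDiff_F (hu : ContDiff ℝ 3 u) : ContDiff ℝ 2 (fderiv ℝ u) :=
  hu.fderiv_right (by norm_num)

lemma contDiff_G (hu : ContDiff ℝ 3 u) : ContDiff ℝ 2 (gradient u) :=
  ((toDual ℝ E').symm.contDiff).comp (contDiff_F hu)

lemma contDiff_A (hu : ContDiff ℝ 3 u) : ContDiff ℝ 1 (fderiv ℝ (fderiv ℝ u)) :=
  (contDiff_F hu).fderiv_right (by norm_num)

lemma contDiff_DG (hu : ContDiff ℝ 3 u) : ContDiff ℝ 1 (fderiv ℝ (gradient u)) :=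
  (contDiff_G hu).fderiv_right (by norm_num)

lemma inner_grad (x w : E') : ⟪gradient u x, w⟫ = fderiv ℝ u x w := by
  simp [gradient, toDual_symm_apply]

/-- `⟪DG x v, w⟫ = A x v w`. -/
lemma lem_DG (hu : ContDiff ℝ 3 u) (x v w : E') :
    ⟪fderiv ℝ (gradient u) x v, w⟫ = fderiv ℝ (fderiv ℝ u) x v w := by
  have hF := contDiff_F hu
  have hG := contDiff_G hu
  have h1 : (fun y => ⟪gradient u y, w⟫) = fun y => fderiv ℝ u y w := by
    funext y; simp [gradient, toDual_symm_apply]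
  have h2 : fderiv ℝ (fun y => ⟪gradient u y, w⟫) x v = ⟪fderiv ℝ (gradient u) x v, w⟫ := by
    rw [fderiv_inner_apply ℝ (hG.differentiable (by norm_num) x) (differentiableAt_const w) v]
    simp [real_inner_comm]
  have h3 : fderiv ℝ (fun y => fderiv ℝ u y w) x v = fderiv ℝ (fderiv ℝ u) x v w :=
    clm_apply_const (hF.differentiable (by norm_num) x) w v
  rw [← h2, h1, h3]

/-- `fderiv (fun y => A y b w) x a = T x a b w`. -/
lemma lem_Tapp (hu : ContDiff ℝ 3 u) (x a b w : E') :
    fderiv ℝ (fun y => fderiv ℝ (fderiv ℝ u) y b w) x a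
      = fderiv ℝ (fderiv ℝ (fderiv ℝ u)) x a b w := by
  have hA := contDiff_A hu
  have hAb : DifferentiableAt ℝ (fun y => fderiv ℝ (fderiv ℝ u) y b) x :=
    (hA.differentiable (by norm_num) x).clm_apply (differentiableAt_const b)
  calc fderiv ℝ (fun y => fderiv ℝ (fderiv ℝ u) y b w) x a
      = fderiv ℝ (fun y => fderiv ℝ (fderiv ℝ u) y b) x a w := clm_apply_const hAb w a
    _ = fderiv ℝ (fderiv ℝ (fderiv ℝ u)) x a b w := by
        rw [clm_apply_const (hA.differentiable (by norm_num) x) b a]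

/-- `⟪D2G x a b, w⟫ = T x a b w`. -/
lemma lem_D2G (hu : ContDiff ℝ 3 u) (x a b w : E') :
    ⟪fderiv ℝ (fderiv ℝ (gradient u)) x a b, w⟫
      = fderiv ℝ (fderiv ℝ (fderiv ℝ u)) x a b w := by
  have hDG := contDiff_DG hu
  have h1 : (fun y => ⟪fderiv ℝ (gradient u) y b, w⟫)
      = fun y => fderiv ℝ (fderiv ℝ u) y b w := funext fun y => lem_DG hu y b w
  have hDGb : DifferentiableAt ℝ (fun y => fderiv ℝ (gradient u) y b) x :=
    (hDG.differentiable (by norm_num) x).clm_apply (differentiableAt_const b)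
  have h2 : fderiv ℝ (fun y => ⟪fderiv ℝ (gradient u) y b, w⟫) x a
      = ⟪fderiv ℝ (fderiv ℝ (gradient u)) x a b, w⟫ := by
    rw [fderiv_inner_apply ℝ hDGb (differentiableAt_const w) a]
    rw [clm_apply_const (hDG.differentiable (by norm_num) x) b a]
    simp [real_inner_comm]
  rw [← lem_Tapp hu x a b w, ← h2, h1]

/-- symmetry of second derivative. -/
lemma symA (hu : ContDiff ℝ 3 u) (x v w : E') :
    fderiv ℝ (fderiv ℝ u) x v w = fderiv ℝ (fderiv ℝ u) x w v :=
  (hu.contDiffAt.isSymmSndFDerivAt (by norm_num)) v w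

/-- symmetry of third derivative in first two slots. -/
lemma symT12 (hu : ContDiff ℝ 3 u) (x a b : E') :
    fderiv ℝ (fderiv ℝ (fderiv ℝ u)) x a b = fderiv ℝ (fderiv ℝ (fderiv ℝ u)) x b a :=
  ((contDiff_F hu).contDiffAt.isSymmSndFDerivAt (by norm_num)) a b

/-- symmetry of third derivative in last two slots. -/
lemma symT23 (hu : ContDiff ℝ 3 u) (x a b w : E') :
    fderiv ℝ (fderiv ℝ (fderiv ℝ u)) x a b w = fderiv ℝ (fderiv ℝ (fderiv ℝ u)) x a w b := by
  have h1 : (fun y => fderiv ℝ (fderiv ℝ u) y b w) = fun y => fderiv ℝ (fderiv ℝ u) y w b :=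
    funext fun y => symA hu y b w
  rw [← lem_Tapp hu x a b w, h1, lem_Tapp hu x a w b]

lemma e_eq : (fun x : E' => ‖gradient u x‖ ^ 2) = fun x => ⟪gradient u x, gradient u x⟫ :=
  funext fun x => (real_inner_self_eq_norm_sq _).symm

lemma contDiff_e (hu : ContDiff ℝ 3 u) : ContDiff ℝ 2 (fun x : E' => ‖gradient u x‖ ^ 2) := by
  rw [e_eq]; exact (contDiff_G hu).inner ℝ (contDiff_G hu)

lemma lem_fderiv_e (hu : ContDiff ℝ 3 u) (x v : E') :
    fderiv ℝ (fun x : E' => ‖gradient u x‖ ^ 2) x v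
      = 2 * ⟪fderiv ℝ (gradient u) x v, gradient u x⟫ := by
  have hG := contDiff_G hu
  rw [e_eq, fderiv_inner_apply ℝ (hG.differentiable (by norm_num) x)
    (hG.differentiable (by norm_num) x) v]
  rw [real_inner_comm (gradient u x)]
  ring

lemma lem_Hess_u (hu : ContDiff ℝ 3 u) (x v w : E') :
    Hess u x v w = fderiv ℝ (fderiv ℝ u) x v w := by
  rw [Hess, iteratedFDeriv_two_apply]
  simp

lemma lem_Hess_e (hu : ContDiff ℝ 3 u) (x v w : E') :
    Hess (fun x : E' => ‖gradient u x‖ ^ 2) x v w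
      = 2 * fderiv ℝ (fderiv ℝ (fderiv ℝ u)) x v w (gradient u x)
        + 2 * ⟪fderiv ℝ (gradient u) x v, fderiv ℝ (gradient u) x w⟫ := by
  have hG := contDiff_G hu
  have hDG := contDiff_DG hu
  have he2 := contDiff_e hu
  have hde : DifferentiableAt ℝ (fderiv ℝ (fun x : E' => ‖gradient u x‖ ^ 2)) x :=
    (he2.fderiv_right (m := 1) (by norm_num)).differentiable (by norm_num) x
  have h0 : Hess (fun x : E' => ‖gradient u x‖ ^ 2) x v w
      = fderiv ℝ (fderiv ℝ (fun x : E' => ‖gradient u x‖ ^ 2)) x v w := by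
    rw [Hess, iteratedFDeriv_two_apply]; simp
  rw [h0, ← clm_apply_const hde w v]
  have h1 : (fun y => fderiv ℝ (fun x : E' => ‖gradient u x‖ ^ 2) y w)
      = fun y => 2 * ⟪fderiv ℝ (gradient u) y w, gradient u y⟫ :=
    funext fun y => lem_fderiv_e hu y w
  rw [h1]
  have hDGw : DifferentiableAt ℝ (fun y => fderiv ℝ (gradient u) y w) x :=
    (hDG.differentiable (by norm_num) x).clm_apply (differentiableAt_const w)
  have hinner : DifferentiableAt ℝ (fun y => ⟪fderiv ℝ (gradient u) y w, gradient u y⟫) x :=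
    hDGw.inner ℝ (hG.differentiable (by norm_num) x)
  rw [fderiv_const_mul hinner 2]
  simp only [ContinuousLinearMap.smul_apply, smul_eq_mul]
  rw [fderiv_inner_apply ℝ hDGw (hG.differentiable (by norm_num) x) v]
  rw [clm_apply_const (hDG.differentiable (by norm_num) x) w v]
  rw [lem_D2G hu x v w (gradient u x)]
  rw [real_inner_comm (fderiv ℝ (gradient u) x w)]
  ring

/-- Differentiated exponential harmonicity. -/
lemma lem_diff_harm (hu : ContDiff ℝ 3 u)
    (hharm : ∀ x, lap u x + Hess u x (gradient u x) (gradient u x) = 0) (x a : E') :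
    (∑ i, fderiv ℝ (fderiv ℝ (fderiv ℝ u)) x a (EuclideanSpace.basisFun (Fin n) ℝ i)
        (EuclideanSpace.basisFun (Fin n) ℝ i))
      + fderiv ℝ (fderiv ℝ (fderiv ℝ u)) x a (gradient u x) (gradient u x)
      + fderiv ℝ (fderiv ℝ u) x (fderiv ℝ (gradient u) x a) (gradient u x)
      + fderiv ℝ (fderiv ℝ u) x (gradient u x) (fderiv ℝ (gradient u) x a) = 0 := by
  have hG := contDiff_G hu
  have hA := contDiff_A hu
  have hGd : DifferentiableAt ℝ (gradient u) x := hG.differentiable (by norm_num) x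
  have hAd : DifferentiableAt ℝ (fderiv ℝ (fderiv ℝ u)) x := hA.differentiable (by norm_num) x
  -- the zero function
  set Φ : E' → ℝ := fun y => (∑ i, fderiv ℝ (fderiv ℝ u) y (EuclideanSpace.basisFun (Fin n) ℝ i)
      (EuclideanSpace.basisFun (Fin n) ℝ i))
      + fderiv ℝ (fderiv ℝ u) y (gradient u y) (gradient u y) with hΦdef
  have hΦ0 : Φ = fun _ => (0:ℝ) := by
    funext y
    have := hharm y
    rw [lap] at this
    simp only [hΦdef]
    rw [← this]
    congr 1
    · exact Finset.sum_congr rfl fun i _ => (lem_Hess_u hu y _ _).symm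
    · exact (lem_Hess_u hu y _ _).symm
  -- differentiability of pieces
  have hterm : ∀ i : Fin n, DifferentiableAt ℝ (fun y => fderiv ℝ (fderiv ℝ u) y
      (EuclideanSpace.basisFun (Fin n) ℝ i) (EuclideanSpace.basisFun (Fin n) ℝ i)) x := by
    intro i
    exact (hAd.clm_apply (differentiableAt_const _)).clm_apply (differentiableAt_const _)
  have hsum : DifferentiableAt ℝ (fun y => ∑ i, fderiv ℝ (fderiv ℝ u) y
      (EuclideanSpace.basisFun (Fin n) ℝ i) (EuclideanSpace.basisFun (Fin n) ℝ i)) x :=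
    DifferentiableAt.fun_sum fun i _ => hterm i
  have hc : DifferentiableAt ℝ (fun y => fderiv ℝ (fderiv ℝ u) y (gradient u y)) x :=
    hAd.clm_apply hGd
  have hsecond : DifferentiableAt ℝ (fun y => fderiv ℝ (fderiv ℝ u) y (gradient u y)
      (gradient u y)) x := hc.clm_apply hGd
  have hΦd : fderiv ℝ Φ x a = 0 := by rw [hΦ0]; simp
  rw [hΦdef] at hΦd
  rw [fderiv_fun_add hsum hsecond] at hΦd
  rw [fderiv_fun_sum (fun i _ => hterm i)] at hΦd
  rw [fderiv_clm_apply hc hGd] at hΦd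
  rw [fderiv_clm_apply hAd hGd] at hΦd
  simp only [ContinuousLinearMap.add_apply, ContinuousLinearMap.coe_comp',
    Function.comp_apply, ContinuousLinearMap.flip_apply, ContinuousLinearMap.coe_sum',
    Finset.sum_apply] at hΦd
  have hT : ∀ i : Fin n, fderiv ℝ (fun y => fderiv ℝ (fderiv ℝ u) y
      (EuclideanSpace.basisFun (Fin n) ℝ i) (EuclideanSpace.basisFun (Fin n) ℝ i)) x a
      = fderiv ℝ (fderiv ℝ (fderiv ℝ u)) x a (EuclideanSpace.basisFun (Fin n) ℝ i)
        (EuclideanSpace.basisFun (Fin n) ℝ i) := fun i => lem_Tapp hu x a _ _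
  simp only [hT] at hΦd
  linarith [hΦd]

lemma lem_grad_e (hu : ContDiff ℝ 3 u) (x : E') :
    gradient (fun x : E' => ‖gradient u x‖ ^ 2) x
      = (2:ℝ) • fderiv ℝ (gradient u) x (gradient u x) := by
  apply ext_inner_right ℝ
  intro v
  have h0 : ⟪gradient (fun x : E' => ‖gradient u x‖ ^ 2) x, v⟫
      = fderiv ℝ (fun x : E' => ‖gradient u x‖ ^ 2) x v := by
    simp [gradient, toDual_symm_apply]
  rw [h0, lem_fderiv_e hu x v, real_inner_smul_left]
  rw [lem_DG hu x v (gradient u x), symA hu x v (gradient u x),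
    ← lem_DG hu x (gradient u x) v]

lemma lem_cs (L : E' →L[ℝ] E') (g : E') :
    ‖L g‖ ^ 2 ≤ ‖g‖ ^ 2 * ∑ i, ‖L (EuclideanSpace.basisFun (Fin n) ℝ i)‖ ^ 2 := by
  have hg : ∑ i, g i • (EuclideanSpace.basisFun (Fin n) ℝ i : E') = g := by
    simpa [EuclideanSpace.basisFun_repr] using
      (EuclideanSpace.basisFun (Fin n) ℝ).sum_repr g
  have h1 : ‖L g‖ ≤ ∑ i, |g i| * ‖L (EuclideanSpace.basisFun (Fin n) ℝ i)‖ := by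
    conv_lhs => rw [← hg]
    rw [map_sum]
    refine (norm_sum_le _ _).trans_eq ?_
    refine Finset.sum_congr rfl fun i _ => ?_
    rw [_root_.map_smul, norm_smul, Real.norm_eq_abs]
  have h2 : ‖L g‖ ^ 2 ≤ (∑ i, |g i| * ‖L (EuclideanSpace.basisFun (Fin n) ℝ i)‖) ^ 2 :=
    pow_le_pow_left₀ (norm_nonneg _) h1 2
  have h3 := Finset.sum_mul_sq_le_sq_mul_sq Finset.univ (fun i => |g i|)
    (fun i => ‖L (EuclideanSpace.basisFun (Fin n) ℝ i)‖)
  have h4 : (∑ i, |g i| ^ 2) = ‖g‖ ^ 2 := by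
    rw [EuclideanSpace.norm_eq, Real.sq_sqrt (Finset.sum_nonneg fun i _ => sq_nonneg _)]
    simp [sq_abs]
  calc ‖L g‖ ^ 2 ≤ _ := h2
    _ ≤ (∑ i, |g i| ^ 2) * ∑ i, ‖L (EuclideanSpace.basisFun (Fin n) ℝ i)‖ ^ 2 := h3
    _ = _ := by rw [h4]

end Stmt6Aux


/-- Refined Bochner estimate `Δ̂^{∇u} e ≥ (1-e)‖∇e‖²/(2e)` at points where the
energy density is positive (flat case). -/
theorem stmt_6 {n : ℕ} (u : EuclideanSpace ℝ (Fin n) → ℝ) (hu : ContDiff ℝ 3 u)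
    (hharm : ∀ x, lap u x + Hess u x (gradient u x) (gradient u x) = 0)
    (e : EuclideanSpace ℝ (Fin n) → ℝ) (he : e = fun x => ‖gradient u x‖ ^ 2) :
    ∀ x, 0 < e x →
      lap e x + Hess e x (gradient u x) (gradient u x)
        ≥ (1 - e x) * ‖gradient e x‖ ^ 2 / (2 * e x) := by
  subst he
  intro x hx
  set g := gradient u x with hg
  set Q : ℝ := ‖fderiv ℝ (gradient u) x g‖ ^ 2 with hQ
  set S : ℝ := ∑ i, ‖fderiv ℝ (gradient u) x (EuclideanSpace.basisFun (Fin n) ℝ i)‖ ^ 2 with hS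
  set En : ℝ := ‖g‖ ^ 2 with hEn
  have hEpos : 0 < En := hx
  -- Hessian of e values
  have hHe : ∀ v w, Hess (fun x => ‖gradient u x‖ ^ 2) x v w
      = 2 * fderiv ℝ (fderiv ℝ (fderiv ℝ u)) x v w g
        + 2 * ⟪fderiv ℝ (gradient u) x v, fderiv ℝ (gradient u) x w⟫ :=
    fun v w => lem_Hess_e hu x v w
  -- Laplacian of e
  have hlap : lap (fun x => ‖gradient u x‖ ^ 2) x
      = (∑ i, 2 * fderiv ℝ (fderiv ℝ (fderiv ℝ u)) x (EuclideanSpace.basisFun (Fin n) ℝ i)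
            (EuclideanSpace.basisFun (Fin n) ℝ i) g) + 2 * S := by
    rw [lap, hS, Finset.mul_sum, ← Finset.sum_add_distrib]
    refine Finset.sum_congr rfl fun i _ => ?_
    rw [hHe]
    congr 1
    rw [real_inner_self_eq_norm_sq]
  -- swap slots in third derivative
  have hswap : ∀ i : Fin n, fderiv ℝ (fderiv ℝ (fderiv ℝ u)) x
      (EuclideanSpace.basisFun (Fin n) ℝ i) (EuclideanSpace.basisFun (Fin n) ℝ i) g
      = fderiv ℝ (fderiv ℝ (fderiv ℝ u)) x g (EuclideanSpace.basisFun (Fin n) ℝ i)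
        (EuclideanSpace.basisFun (Fin n) ℝ i) := by
    intro i
    rw [symT23 hu x (EuclideanSpace.basisFun (Fin n) ℝ i) (EuclideanSpace.basisFun (Fin n) ℝ i) g,
      symT12 hu x (EuclideanSpace.basisFun (Fin n) ℝ i) g]
  -- differentiated harmonicity at a = g
  have hdh := lem_diff_harm hu hharm x g
  have hQ1 : fderiv ℝ (fderiv ℝ u) x g (fderiv ℝ (gradient u) x g) = Q := by
    rw [← lem_DG hu x g (fderiv ℝ (gradient u) x g), real_inner_self_eq_norm_sq]
  have hQ2 : fderiv ℝ (fderiv ℝ u) x (fderiv ℝ (gradient u) x g) g = Q := by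
    rw [symA hu x (fderiv ℝ (gradient u) x g) g, hQ1]
  rw [hQ1, hQ2] at hdh
  have hsum3 : (∑ i, fderiv ℝ (fderiv ℝ (fderiv ℝ u)) x (EuclideanSpace.basisFun (Fin n) ℝ i)
      (EuclideanSpace.basisFun (Fin n) ℝ i) g)
      = -(fderiv ℝ (fderiv ℝ (fderiv ℝ u)) x g g g) - 2 * Q := by
    rw [Finset.sum_congr rfl fun i _ => hswap i]
    linarith [hdh]
  -- the left-hand side equals 2S - 2Q
  have hHgg : Hess (fun x => ‖gradient u x‖ ^ 2) x g g
      = 2 * fderiv ℝ (fderiv ℝ (fderiv ℝ u)) x g g g + 2 * Q := by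
    rw [hHe g g, real_inner_self_eq_norm_sq]
  have hLHS : lap (fun x => ‖gradient u x‖ ^ 2) x
      + Hess (fun x => ‖gradient u x‖ ^ 2) x g g = 2 * S - 2 * Q := by
    rw [hlap, hHgg]
    have : (∑ i, 2 * fderiv ℝ (fderiv ℝ (fderiv ℝ u)) x (EuclideanSpace.basisFun (Fin n) ℝ i)
        (EuclideanSpace.basisFun (Fin n) ℝ i) g)
        = 2 * (-(fderiv ℝ (fderiv ℝ (fderiv ℝ u)) x g g g) - 2 * Q) := by
      rw [← Finset.mul_sum, hsum3]
    rw [this]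
    ring
  -- gradient of e
  have hge : ‖gradient (fun x => ‖gradient u x‖ ^ 2) x‖ ^ 2 = 4 * Q := by
    rw [lem_grad_e hu x, norm_smul]
    simp [hQ]
    ring
  -- Cauchy-Schwarz
  have hcs : Q ≤ En * S := lem_cs (fderiv ℝ (gradient u) x) g
  have hQ0 : 0 ≤ Q := sq_nonneg _
  rw [hLHS, hge, ge_iff_le, div_le_iff₀ (by linarith : (0:ℝ) < 2 * En)]
  nlinarith [hcs, hEpos, hQ0]
end

section
/- Let u : EuclideanSpace ℝ (Fin n) → ℝ be C³ and satisfy Δu(x) + Hess u(x)(∇u(x), ∇u(x)) = 0 for all x (exponential harmonicity). Then for every x: ⟪∇u(x), ∇(Δu)(x)⟫ + iteratedFDeriv ℝ 3 u x ![∇u(x), ∇u(x), ∇u(x)] = −2 ∑ⱼ (Hess u(x)(∇u(x), eⱼ))², i.e. minus twice the squared norm of the vector Hess u(x) applied to ∇u(x). -/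
open scoped RealInnerProductSpace
open Real MeasureTheory

section Aux

variable {n : ℕ}

local notation "E" => EuclideanSpace ℝ (Fin n)

noncomputable abbrev ee (n : ℕ) (i : Fin n) : EuclideanSpace ℝ (Fin n) :=
  EuclideanSpace.basisFun (Fin n) ℝ i

lemma inner_grad_s8 (f : E → ℝ) (x v : E) : ⟪gradient f x, v⟫ = fderiv ℝ f x v :=
  InnerProductSpace.toDual_symm_apply

lemma hess_fd (f : E → ℝ) (x v w : E) : Hess f x v w = fderiv ℝ (fderiv ℝ f) x v w := by
  rw [Hess, iteratedFDeriv_two_apply]; simp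

lemma upd0 {α : Type*} (a b c : α) : Function.update ![a, b] 0 c = ![c, b] := by
  ext i; fin_cases i <;> simp
lemma upd1 {α : Type*} (a b c : α) : Function.update ![a, b] 1 c = ![a, c] := by
  ext i; fin_cases i <;> simp

lemma basis_expand (a : E) : ∑ i, ⟪a, ee n i⟫ • ee n i = a := by
  have h := (EuclideanSpace.basisFun (Fin n) ℝ).sum_repr' a
  calc ∑ i, ⟪a, ee n i⟫ • ee n i = ∑ i, ⟪ee n i, a⟫ • ee n i := by
        refine Finset.sum_congr rfl fun i _ => ?_
        rw [real_inner_comm]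
    _ = a := h

lemma clm_expand (L : E →L[ℝ] ℝ) (b : E) : L b = ∑ j, ⟪b, ee n j⟫ * L (ee n j) := by
  conv_lhs => rw [← basis_expand b]
  rw [map_sum]
  simp [smul_eq_mul]

lemma multilin2_left (M : ContinuousMultilinearMap ℝ (fun _ : Fin 2 => E) ℝ) (a b : E) :
    M ![a, b] = ∑ i, ⟪a, ee n i⟫ * M ![ee n i, b] := by
  have h1 : M ![a, b] = M (Function.update ![a, b] 0 (∑ i, ⟪a, ee n i⟫ • ee n i)) := by
    rw [basis_expand a, upd0]
  rw [h1, ← ContinuousMultilinearMap.coe_coe, MultilinearMap.map_update_sum]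
  refine Finset.sum_congr rfl fun i _ => ?_
  rw [MultilinearMap.map_update_smul, upd0]
  simp [smul_eq_mul]

lemma multilin2_right (M : ContinuousMultilinearMap ℝ (fun _ : Fin 2 => E) ℝ) (a b : E) :
    M ![a, b] = ∑ j, ⟪b, ee n j⟫ * M ![a, ee n j] := by
  have h1 : M ![a, b] = M (Function.update ![a, b] 1 (∑ j, ⟪b, ee n j⟫ • ee n j)) := by
    rw [basis_expand b, upd1]
  rw [h1, ← ContinuousMultilinearMap.coe_coe, MultilinearMap.map_update_sum]
  refine Finset.sum_congr rfl fun j _ => ?_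
  rw [MultilinearMap.map_update_smul, upd1]
  simp [smul_eq_mul]

lemma multilin2_expand (M : ContinuousMultilinearMap ℝ (fun _ : Fin 2 => E) ℝ) (a b : E) :
    M ![a, b] = ∑ i, ∑ j, ⟪a, ee n i⟫ * ⟪b, ee n j⟫ * M ![ee n i, ee n j] := by
  rw [multilin2_left]
  refine Finset.sum_congr rfl fun i _ => ?_
  rw [multilin2_right, Finset.mul_sum]
  exact Finset.sum_congr rfl fun j _ => by ring

lemma hess_expand (f : E → ℝ) (x a b : E) :
    Hess f x a b = ∑ i, ∑ j, ⟪a, ee n i⟫ * ⟪b, ee n j⟫ * Hess f x (ee n i) (ee n j) := by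
  rw [Hess, multilin2_expand]
  rfl

end Aux

section Deriv

variable {n : ℕ} {u : EuclideanSpace ℝ (Fin n) → ℝ}

local notation "E" => EuclideanSpace ℝ (Fin n)

lemma h_eq (i j : Fin n) : (fun y => fderiv ℝ (fderiv ℝ u) y (ee n i) (ee n j))
    = (ContinuousMultilinearMap.apply ℝ (fun _ : Fin 2 => E) ℝ ![ee n i, ee n j]) ∘
        (iteratedFDeriv ℝ 2 u) := by
  funext y
  simp only [Function.comp_apply, ContinuousMultilinearMap.apply_apply, iteratedFDeriv_two_apply]
  simp

lemma g_diff (hu : ContDiff ℝ 3 u) (i : Fin n) :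
    Differentiable ℝ (fun y => fderiv ℝ u y (ee n i)) :=
  (ContinuousLinearMap.apply ℝ ℝ (ee n i)).differentiable.comp
    ((hu.fderiv_right (m := 2) (by norm_num)).differentiable (by norm_num))

lemma h_diff (hu : ContDiff ℝ 3 u) (i j : Fin n) :
    Differentiable ℝ (fun y => fderiv ℝ (fderiv ℝ u) y (ee n i) (ee n j)) := by
  rw [h_eq]
  exact (ContinuousMultilinearMap.apply ℝ (fun _ : Fin 2 => E) ℝ
    ![ee n i, ee n j]).differentiable.comp (hu.differentiable_iteratedFDeriv (by norm_num))

lemma fderiv_g (hu : ContDiff ℝ 3 u) (i : Fin n) (x w : E) :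
    fderiv ℝ (fun y => fderiv ℝ u y (ee n i)) x w = fderiv ℝ (fderiv ℝ u) x w (ee n i) := by
  have hd : HasFDerivAt (fderiv ℝ u) (fderiv ℝ (fderiv ℝ u) x) x :=
    (((hu.fderiv_right (m := 2) (by norm_num)).differentiable (by norm_num)) x).hasFDerivAt
  have h2 := ((ContinuousLinearMap.apply ℝ ℝ (ee n i)).hasFDerivAt.comp x hd).fderiv
  rw [show (fun y => fderiv ℝ u y (ee n i))
      = (ContinuousLinearMap.apply ℝ ℝ (ee n i)) ∘ (fderiv ℝ u) from rfl, h2]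
  rfl

lemma fderiv_h (hu : ContDiff ℝ 3 u) (i j : Fin n) (x w : E) :
    fderiv ℝ (fun y => fderiv ℝ (fderiv ℝ u) y (ee n i) (ee n j)) x w
      = iteratedFDeriv ℝ 3 u x ![w, ee n i, ee n j] := by
  have hd : HasFDerivAt (iteratedFDeriv ℝ 2 u) (fderiv ℝ (iteratedFDeriv ℝ 2 u) x) x :=
    (hu.differentiable_iteratedFDeriv (by norm_num) x).hasFDerivAt
  rw [h_eq, ((ContinuousMultilinearMap.apply ℝ (fun _ : Fin 2 => E) ℝ
      ![ee n i, ee n j]).hasFDerivAt.comp x hd).fderiv]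
  rfl

lemma fderiv_mul3 {p q r : E → ℝ} {x : E} (hp : DifferentiableAt ℝ p x)
    (hq : DifferentiableAt ℝ q x) (hr : DifferentiableAt ℝ r x) (w : E) :
    fderiv ℝ (fun y => p y * q y * r y) x w =
      fderiv ℝ p x w * q x * r x + p x * fderiv ℝ q x w * r x + p x * q x * fderiv ℝ r x w := by
  rw [((hp.hasFDerivAt.fun_mul hq.hasFDerivAt).fun_mul hr.hasFDerivAt).fderiv]
  simp only [ContinuousLinearMap.add_apply, ContinuousLinearMap.smul_apply, smul_eq_mul,
    ContinuousLinearMap.coe_smul', Pi.smul_apply]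
  ring

end Deriv


/-- Differentiating the exponential harmonicity equation in the direction `∇u`:
`⟪∇u, ∇(Δu)⟫ + (∇³u)(∇u,∇u,∇u) = −2 ∑ⱼ (Hess u(∇u, eⱼ))²`. -/
theorem stmt_8 {n : ℕ} (u : EuclideanSpace ℝ (Fin n) → ℝ) (hu : ContDiff ℝ 3 u)
    (hharm : ∀ x, lap u x + Hess u x (gradient u x) (gradient u x) = 0) :
    ∀ x, ⟪gradient u x, gradient (lap u) x⟫
        + iteratedFDeriv ℝ 3 u x ![gradient u x, gradient u x, gradient u x]
      = -2 * ∑ j, (Hess u x (gradient u x) (EuclideanSpace.basisFun (Fin n) ℝ j)) ^ 2 := by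
  intro x
  classical
  set v := gradient u x with hv
  have hgd : ∀ i, DifferentiableAt ℝ (fun y => fderiv ℝ u y (ee n i)) x :=
    fun i => g_diff hu i x
  have hhd : ∀ i j, DifferentiableAt ℝ
      (fun y => fderiv ℝ (fderiv ℝ u) y (ee n i) (ee n j)) x := fun i j => h_diff hu i j x
  have hlapF : lap u = fun y => ∑ i, fderiv ℝ (fderiv ℝ u) y (ee n i) (ee n i) := by
    funext y; rw [lap]; exact Finset.sum_congr rfl fun i _ => hess_fd u y _ _
  have hGexp : ∀ y, Hess u y (gradient u y) (gradient u y)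
      = ∑ i, ∑ j, fderiv ℝ u y (ee n i) * fderiv ℝ u y (ee n j)
          * fderiv ℝ (fderiv ℝ u) y (ee n i) (ee n j) := by
    intro y
    rw [hess_expand]
    refine Finset.sum_congr rfl fun i _ => Finset.sum_congr rfl fun j _ => ?_
    rw [hess_fd, inner_grad_s8, inner_grad_s8]
  have hF : (fun y => (∑ i, fderiv ℝ (fderiv ℝ u) y (ee n i) (ee n i))
      + ∑ i, ∑ j, fderiv ℝ u y (ee n i) * fderiv ℝ u y (ee n j)
          * fderiv ℝ (fderiv ℝ u) y (ee n i) (ee n j)) = fun _ => (0:ℝ) := by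
    funext y
    rw [← hGexp y,
      show (∑ i, fderiv ℝ (fderiv ℝ u) y (ee n i) (ee n i)) = lap u y from
        (congrFun hlapF y).symm]
    exact hharm y
  have dif1 : DifferentiableAt ℝ
      (fun y => ∑ i, fderiv ℝ (fderiv ℝ u) y (ee n i) (ee n i)) x :=
    DifferentiableAt.fun_sum fun i _ => hhd i i
  have dif2 : DifferentiableAt ℝ (fun y => ∑ i, ∑ j,
      fderiv ℝ u y (ee n i) * fderiv ℝ u y (ee n j)
        * fderiv ℝ (fderiv ℝ u) y (ee n i) (ee n j)) x :=
    DifferentiableAt.fun_sum fun i _ => DifferentiableAt.fun_sum fun j _ =>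
      ((hgd i).fun_mul (hgd j)).fun_mul (hhd i j)
  have c1 : fderiv ℝ (fun y => ∑ i, fderiv ℝ (fderiv ℝ u) y (ee n i) (ee n i)) x v
      = ∑ i, iteratedFDeriv ℝ 3 u x ![v, ee n i, ee n i] := by
    rw [fderiv_fun_sum (fun i _ => hhd i i), ContinuousLinearMap.sum_apply]
    exact Finset.sum_congr rfl fun i _ => fderiv_h hu i i x v
  have c2 : fderiv ℝ (fun y => ∑ i, ∑ j,
      fderiv ℝ u y (ee n i) * fderiv ℝ u y (ee n j)
        * fderiv ℝ (fderiv ℝ u) y (ee n i) (ee n j)) x v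
      = ∑ i, ∑ j,
        (fderiv ℝ (fderiv ℝ u) x v (ee n i) * fderiv ℝ u x (ee n j)
            * fderiv ℝ (fderiv ℝ u) x (ee n i) (ee n j)
        + fderiv ℝ u x (ee n i) * fderiv ℝ (fderiv ℝ u) x v (ee n j)
            * fderiv ℝ (fderiv ℝ u) x (ee n i) (ee n j)
        + fderiv ℝ u x (ee n i) * fderiv ℝ u x (ee n j)
            * iteratedFDeriv ℝ 3 u x ![v, ee n i, ee n j]) := by
    rw [fderiv_fun_sum (fun i _ => DifferentiableAt.fun_sum fun j _ =>
      ((hgd i).fun_mul (hgd j)).fun_mul (hhd i j)), ContinuousLinearMap.sum_apply]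
    refine Finset.sum_congr rfl fun i _ => ?_
    rw [fderiv_fun_sum (fun j _ => ((hgd i).fun_mul (hgd j)).fun_mul (hhd i j)),
      ContinuousLinearMap.sum_apply]
    refine Finset.sum_congr rfl fun j _ => ?_
    rw [fderiv_mul3 (hgd i) (hgd j) (hhd i j), fderiv_g hu i x v, fderiv_g hu j x v,
      fderiv_h hu i j x v]
  have main : (∑ i, iteratedFDeriv ℝ 3 u x ![v, ee n i, ee n i])
      + ∑ i, ∑ j,
        (fderiv ℝ (fderiv ℝ u) x v (ee n i) * fderiv ℝ u x (ee n j)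
            * fderiv ℝ (fderiv ℝ u) x (ee n i) (ee n j)
        + fderiv ℝ u x (ee n i) * fderiv ℝ (fderiv ℝ u) x v (ee n j)
            * fderiv ℝ (fderiv ℝ u) x (ee n i) (ee n j)
        + fderiv ℝ u x (ee n i) * fderiv ℝ u x (ee n j)
            * iteratedFDeriv ℝ 3 u x ![v, ee n i, ee n j]) = 0 := by
    have h0 : fderiv ℝ (fun y => (∑ i, fderiv ℝ (fderiv ℝ u) y (ee n i) (ee n i))
        + ∑ i, ∑ j, fderiv ℝ u y (ee n i) * fderiv ℝ u y (ee n j)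
            * fderiv ℝ (fderiv ℝ u) y (ee n i) (ee n j)) x v = 0 := by
      rw [hF, fderiv_fun_const]
      simp
    rw [fderiv_fun_add dif1 dif2, ContinuousLinearMap.add_apply, c1, c2] at h0
    exact h0
  -- abbreviations
  have hw : ∀ i, ⟪v, ee n i⟫ = fderiv ℝ u x (ee n i) := fun i => inner_grad_s8 u x (ee n i)
  have hsym : ∀ a b : EuclideanSpace ℝ (Fin n),
      fderiv ℝ (fderiv ℝ u) x a b = fderiv ℝ (fderiv ℝ u) x b a :=
    hu.contDiffAt.isSymmSndFDerivAt (by norm_num)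
  have hM : ∀ a b : EuclideanSpace ℝ (Fin n), iteratedFDeriv ℝ 3 u x ![v, a, b]
      = (fderiv ℝ (iteratedFDeriv ℝ 2 u) x v) ![a, b] := fun a b => rfl
  have T1 : ⟪v, gradient (lap u) x⟫ = ∑ i, iteratedFDeriv ℝ 3 u x ![v, ee n i, ee n i] := by
    rw [real_inner_comm, inner_grad_s8, hlapF]
    exact c1
  have T2 : iteratedFDeriv ℝ 3 u x ![v, v, v]
      = ∑ i, ∑ j, fderiv ℝ u x (ee n i) * fderiv ℝ u x (ee n j)
          * iteratedFDeriv ℝ 3 u x ![v, ee n i, ee n j] := by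
    rw [hM v v, multilin2_expand]
    exact Finset.sum_congr rfl fun i _ => Finset.sum_congr rfl fun j _ => by
      rw [← hM, hw i, hw j]
  have inner_j : ∀ i, ∑ j, fderiv ℝ u x (ee n j) * fderiv ℝ (fderiv ℝ u) x (ee n i) (ee n j)
      = fderiv ℝ (fderiv ℝ u) x (ee n i) v := by
    intro i
    rw [clm_expand (fderiv ℝ (fderiv ℝ u) x (ee n i)) v]
    exact Finset.sum_congr rfl fun j _ => by rw [hw j]
  have T3 : ∑ i, ∑ j, fderiv ℝ (fderiv ℝ u) x v (ee n i) * fderiv ℝ u x (ee n j)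
        * fderiv ℝ (fderiv ℝ u) x (ee n i) (ee n j)
      = ∑ i, fderiv ℝ (fderiv ℝ u) x v (ee n i) * fderiv ℝ (fderiv ℝ u) x v (ee n i) := by
    refine Finset.sum_congr rfl fun i _ => ?_
    rw [show ∑ j, fderiv ℝ (fderiv ℝ u) x v (ee n i) * fderiv ℝ u x (ee n j)
          * fderiv ℝ (fderiv ℝ u) x (ee n i) (ee n j)
        = fderiv ℝ (fderiv ℝ u) x v (ee n i) * ∑ j, fderiv ℝ u x (ee n j)
          * fderiv ℝ (fderiv ℝ u) x (ee n i) (ee n j) from by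
        rw [Finset.mul_sum]; exact Finset.sum_congr rfl fun j _ => by ring]
    rw [inner_j i, hsym (ee n i) v]
  have T4 : ∑ i, ∑ j, fderiv ℝ u x (ee n i) * fderiv ℝ (fderiv ℝ u) x v (ee n j)
        * fderiv ℝ (fderiv ℝ u) x (ee n i) (ee n j)
      = ∑ j, fderiv ℝ (fderiv ℝ u) x v (ee n j) * fderiv ℝ (fderiv ℝ u) x v (ee n j) := by
    rw [Finset.sum_comm]
    refine Finset.sum_congr rfl fun j _ => ?_
    rw [show ∑ i, fderiv ℝ u x (ee n i) * fderiv ℝ (fderiv ℝ u) x v (ee n j)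
          * fderiv ℝ (fderiv ℝ u) x (ee n i) (ee n j)
        = fderiv ℝ (fderiv ℝ u) x v (ee n j) * ∑ i, fderiv ℝ u x (ee n i)
          * fderiv ℝ (fderiv ℝ u) x (ee n j) (ee n i) from by
        rw [Finset.mul_sum]
        exact Finset.sum_congr rfl fun i _ => by rw [hsym (ee n i) (ee n j)]; ring]
    rw [inner_j j, hsym (ee n j) v]
  have hR : ∑ j, (Hess u x v (ee n j)) ^ 2
      = ∑ j, fderiv ℝ (fderiv ℝ u) x v (ee n j) * fderiv ℝ (fderiv ℝ u) x v (ee n j) := by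
    exact Finset.sum_congr rfl fun j _ => by rw [hess_fd]; ring
  have hsplit : ∑ i, ∑ j,
        (fderiv ℝ (fderiv ℝ u) x v (ee n i) * fderiv ℝ u x (ee n j)
            * fderiv ℝ (fderiv ℝ u) x (ee n i) (ee n j)
        + fderiv ℝ u x (ee n i) * fderiv ℝ (fderiv ℝ u) x v (ee n j)
            * fderiv ℝ (fderiv ℝ u) x (ee n i) (ee n j)
        + fderiv ℝ u x (ee n i) * fderiv ℝ u x (ee n j)
            * iteratedFDeriv ℝ 3 u x ![v, ee n i, ee n j])
      = (∑ i, ∑ j, fderiv ℝ (fderiv ℝ u) x v (ee n i) * fderiv ℝ u x (ee n j)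
            * fderiv ℝ (fderiv ℝ u) x (ee n i) (ee n j))
      + (∑ i, ∑ j, fderiv ℝ u x (ee n i) * fderiv ℝ (fderiv ℝ u) x v (ee n j)
            * fderiv ℝ (fderiv ℝ u) x (ee n i) (ee n j))
      + (∑ i, ∑ j, fderiv ℝ u x (ee n i) * fderiv ℝ u x (ee n j)
            * iteratedFDeriv ℝ 3 u x ![v, ee n i, ee n j]) := by
    simp [Finset.sum_add_distrib]
  show ⟪v, gradient (lap u) x⟫ + iteratedFDeriv ℝ 3 u x ![v, v, v]
      = -2 * ∑ j, (Hess u x v (ee n j)) ^ 2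
  rw [T1, T2, hR]
  rw [hsplit, T3, T4] at main
  linarith [main]
end
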